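/- Joint minimization form of LD: min over t ∈ {0,...,T−1} and pairs of distributions (Q_1,Q_2) of [(T−t)D(Q_1‖P_A) + (M−2T+t)D(Q_1‖P_N) + (T−t)D(Q_2‖P_N) + t·D(Q_2‖P_A)] equals min over t ∈ {0,...,T−1} of (T−t)·(D_{t/T}(P_A‖P_N) + D_{(M−2T+t)/(M−T)}(P_N‖P_A)). -/

import Mathlib

open Real Finset Filter

open scoped Classical

variable {X : Type*}

def IsProb [Fintype X] (P : X → ℝ) : Prop := (∀ x, 0 ≤ P x) ∧ ∑ x, P x = 1

noncomputable def KL [Fintype X] (P Q : X → ℝ) : ℝ := ∑ x, P x * Real.log (P x / Q x)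

noncomputable def GJS [Fintype X] (P Q : X → ℝ) (α : ℝ) : ℝ :=
  α * KL P (fun x => (α * P x + Q x) / (1 + α)) + KL Q (fun x => (α * P x + Q x) / (1 + α))

noncomputable def Renyi [Fintype X] (β : ℝ) (P Q : X → ℝ) : ℝ :=
  (1 / (β - 1)) * Real.log (∑ x, P x ^ β * Q x ^ (1 - β))

noncomputable def scoreG [Fintype X] {M : ℕ} (Q : Fin M → X → ℝ) (i : Fin M) : ℝ :=
  ∑ j ∈ Finset.univ.erase i,
    KL (Q j) (fun x => (∑ l ∈ Finset.univ.erase i, Q l x) / ((M : ℝ) - 1))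

lemma KL_nonneg [Fintype X] {Q R : X → ℝ} (hQ : IsProb Q) (hRpos : ∀ x, 0 < R x)
    (hR : ∑ x, R x = 1) : 0 ≤ KL Q R := by
  have h : ∀ x, Q x - R x ≤ Q x * Real.log (Q x / R x) := by
    intro x
    rcases eq_or_lt_of_le (hQ.1 x) with h0 | h0
    · rw [← h0]; simp; linarith [(hRpos x).le]
    · have hlog : Real.log (R x / Q x) ≤ R x / Q x - 1 :=
        Real.log_le_sub_one_of_pos (div_pos (hRpos x) h0)
      have hkey : 1 - R x / Q x ≤ Real.log (Q x / R x) := by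
        rw [Real.log_div (ne_of_gt h0) (ne_of_gt (hRpos x))]
        rw [Real.log_div (ne_of_gt (hRpos x)) (ne_of_gt h0)] at hlog
        linarith
      calc Q x - R x = Q x * (1 - R x / Q x) := by field_simp
        _ ≤ Q x * Real.log (Q x / R x) := mul_le_mul_of_nonneg_left hkey h0.le
  calc (0:ℝ) = ∑ x, Q x - ∑ x, R x := by rw [hQ.2, hR]; ring
    _ = ∑ x, (Q x - R x) := by rw [Finset.sum_sub_distrib]
    _ ≤ ∑ x, Q x * Real.log (Q x / R x) := Finset.sum_le_sum fun x _ => h x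

lemma gibbs [Fintype X] (P R : X → ℝ) (hPpos : ∀ x, 0 < P x) (hRpos : ∀ x, 0 < R x)
    (hP1 : ∑ x, P x = 1) (hR1 : ∑ x, R x = 1)
    (a b : ℝ) (ha : 0 < a) (hb : 0 ≤ b) :
    (∃ Q : X → ℝ, IsProb Q ∧ a * KL Q P + b * KL Q R
        = -(a+b) * Real.log (∑ x, P x ^ (a/(a+b)) * R x ^ (1 - a/(a+b)))) ∧
    ∀ Q : X → ℝ, IsProb Q →
      -(a+b) * Real.log (∑ x, P x ^ (a/(a+b)) * R x ^ (1 - a/(a+b)))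
        ≤ a * KL Q P + b * KL Q R := by
  have hs : (0:ℝ) < a + b := by linarith
  have hune : (Finset.univ : Finset X).Nonempty := by
    rw [Finset.nonempty_iff_ne_empty]
    intro h; rw [h] at hP1; simp at hP1
  set Z : ℝ := ∑ x, P x ^ (a/(a+b)) * R x ^ (1 - a/(a+b)) with hZ
  have hZpos : 0 < Z := Finset.sum_pos (fun x _ => by
    have := hPpos x; have := hRpos x; positivity) hune
  set Qs : X → ℝ := fun x => P x ^ (a/(a+b)) * R x ^ (1 - a/(a+b)) / Z with hQs
  have hQspos : ∀ x, 0 < Qs x := fun x => by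
    have := hPpos x; have := hRpos x; positivity
  have hQsprob : IsProb Qs := by
    constructor
    · exact fun x => (hQspos x).le
    · rw [hQs]; rw [← Finset.sum_div, ← hZ, div_self hZpos.ne']
  have hl : (a + b) * (a / (a + b)) = a := mul_div_cancel₀ a hs.ne'
  have key : ∀ Q : X → ℝ, IsProb Q →
      a * KL Q P + b * KL Q R = (a+b) * KL Q Qs - (a+b) * Real.log Z := by
    intro Q hQ
    have hconst : (a+b) * Real.log Z = ∑ x, Q x * ((a+b) * Real.log Z) := by
      rw [← Finset.sum_mul, hQ.2, one_mul]
    unfold KL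
    rw [Finset.mul_sum, Finset.mul_sum, Finset.mul_sum, hconst,
      ← Finset.sum_add_distrib, ← Finset.sum_sub_distrib]
    apply Finset.sum_congr rfl
    intro x _
    rcases eq_or_lt_of_le (hQ.1 x) with h0 | h0
    · rw [← h0]; ring
    · have hlogQs : Real.log (Qs x) = (a/(a+b)) * Real.log (P x)
          + (1 - a/(a+b)) * Real.log (R x) - Real.log Z := by
        rw [hQs]
        rw [Real.log_div (by have := hPpos x; have := hRpos x; positivity) hZpos.ne',
          Real.log_mul (by have := hPpos x; positivity) (by have := hRpos x; positivity),
          Real.log_rpow (hPpos x), Real.log_rpow (hRpos x)]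
      rw [Real.log_div h0.ne' (hPpos x).ne', Real.log_div h0.ne' (hRpos x).ne',
        Real.log_div h0.ne' (hQspos x).ne', hlogQs]
      linear_combination (Q x * (Real.log (P x) - Real.log (R x))) * hl
  have hKLself : KL Qs Qs = 0 := by
    unfold KL
    apply Finset.sum_eq_zero
    intro x _
    rw [div_self (hQspos x).ne', Real.log_one, mul_zero]
  constructor
  · refine ⟨Qs, hQsprob, ?_⟩
    rw [key Qs hQsprob, hKLself]; ring
  · intro Q hQ
    rw [key Q hQ]
    have h1 : 0 ≤ KL Q Qs := KL_nonneg hQ hQspos hQsprob.2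
    nlinarith

lemma renyi_eq [Fintype X] (P R : X → ℝ) (a b : ℝ) (ha : 0 < a) (hab : 0 < a + b) :
    a * Renyi (b/(a+b)) R P
      = -(a+b) * Real.log (∑ x, P x ^ (a/(a+b)) * R x ^ (1 - a/(a+b))) := by
  unfold Renyi
  have h1 : (1 : ℝ) - b/(a+b) = a/(a+b) := by field_simp; ring
  have h2 : b/(a+b) - 1 = -(a/(a+b)) := by field_simp; ring
  have h3 : (1:ℝ) - a/(a+b) = b/(a+b) := by field_simp; ring
  have h4 : ∀ x : X, R x ^ (b/(a+b)) * P x ^ (1 - b/(a+b))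
      = P x ^ (a/(a+b)) * R x ^ (1 - a/(a+b)) := by
    intro x; rw [h1, h3]; ring
  have h5 : a * (1 / (b/(a+b) - 1)) = -(a+b) := by
    rw [h2]
    have ha' := ha.ne'
    have hab' := hab.ne'
    field_simp
  rw [Finset.sum_congr rfl (fun x _ => h4 x), ← mul_assoc, h5]

theorem LD_joint_min [Fintype X] (PN PA : X → ℝ) (hPN : IsProb PN) (hPA : IsProb PA)
    (hPNpos : ∀ x, 0 < PN x) (hPApos : ∀ x, 0 < PA x)
    (T : ℕ) (hT : 1 ≤ T) (M : ℕ) (hM : 2 * T < M) :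
    sInf {v : ℝ | ∃ t : ℕ, t < T ∧ ∃ Q₁ Q₂ : X → ℝ, IsProb Q₁ ∧ IsProb Q₂ ∧
        v = ((T : ℝ) - t) * KL Q₁ PA + ((M : ℝ) - 2 * T + t) * KL Q₁ PN
          + ((T : ℝ) - t) * KL Q₂ PN + (t : ℝ) * KL Q₂ PA}
      = sInf {v : ℝ | ∃ t : ℕ, t < T ∧
        v = ((T : ℝ) - t) * (Renyi ((t : ℝ) / T) PA PN
            + Renyi (((M : ℝ) - 2 * T + t) / ((M : ℝ) - T)) PN PA)} := by
  have hTpos : (0:ℝ) < T := by exact_mod_cast Nat.lt_of_lt_of_le Nat.zero_lt_one hT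
  have key : ∀ t : ℕ, t < T →
      (∃ Q₁ Q₂ : X → ℝ, IsProb Q₁ ∧ IsProb Q₂ ∧
        ((T : ℝ) - t) * KL Q₁ PA + ((M : ℝ) - 2 * T + t) * KL Q₁ PN
          + ((T : ℝ) - t) * KL Q₂ PN + (t : ℝ) * KL Q₂ PA
          = ((T : ℝ) - t) * (Renyi ((t : ℝ) / T) PA PN
            + Renyi (((M : ℝ) - 2 * T + t) / ((M : ℝ) - T)) PN PA)) ∧
      ∀ Q₁ Q₂ : X → ℝ, IsProb Q₁ → IsProb Q₂ →
        ((T : ℝ) - t) * (Renyi ((t : ℝ) / T) PA PN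
            + Renyi (((M : ℝ) - 2 * T + t) / ((M : ℝ) - T)) PN PA)
          ≤ ((T : ℝ) - t) * KL Q₁ PA + ((M : ℝ) - 2 * T + t) * KL Q₁ PN
          + ((T : ℝ) - t) * KL Q₂ PN + (t : ℝ) * KL Q₂ PA := by
    intro t ht
    have ha : (0:ℝ) < (T:ℝ) - t := sub_pos.mpr (by exact_mod_cast ht)
    have hb1 : (0:ℝ) ≤ (M:ℝ) - 2 * T + t := by
      have h2TM : ((2 * T : ℕ) : ℝ) < (M : ℕ) := by exact_mod_cast hM
      have ht0 : (0:ℝ) ≤ (t:ℝ) := Nat.cast_nonneg t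
      push_cast at h2TM
      linarith
    have hs1 : ((T:ℝ) - t) + ((M:ℝ) - 2 * T + t) = (M:ℝ) - T := by ring
    have hs2 : ((T:ℝ) - t) + (t:ℝ) = (T:ℝ) := by ring
    obtain ⟨⟨Q₁, hQ₁, hQ₁eq⟩, hlb₁⟩ :=
      gibbs PA PN hPApos hPNpos hPA.2 hPN.2 ((T:ℝ) - t) ((M:ℝ) - 2 * T + t) ha hb1
    obtain ⟨⟨Q₂, hQ₂, hQ₂eq⟩, hlb₂⟩ :=
      gibbs PN PA hPNpos hPApos hPN.2 hPA.2 ((T:ℝ) - t) (t:ℝ) ha (Nat.cast_nonneg t)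
    have hf1 := renyi_eq PA PN ((T:ℝ) - t) ((M:ℝ) - 2 * T + t) ha (by rw [hs1]; linarith)
    have hf2 := renyi_eq PN PA ((T:ℝ) - t) (t:ℝ) ha (by rw [hs2]; exact hTpos)
    rw [hs1] at hQ₁eq hlb₁ hf1
    rw [hs2] at hQ₂eq hlb₂ hf2
    have hft : ((T : ℝ) - t) * (Renyi ((t : ℝ) / T) PA PN
          + Renyi (((M : ℝ) - 2 * T + t) / ((M : ℝ) - T)) PN PA)
        = -((M:ℝ) - T) * Real.log (∑ x, PA x ^ (((T:ℝ) - t) / ((M:ℝ) - T))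
              * PN x ^ (1 - ((T:ℝ) - t) / ((M:ℝ) - T)))
          + -(T:ℝ) * Real.log (∑ x, PN x ^ (((T:ℝ) - t) / (T:ℝ))
              * PA x ^ (1 - ((T:ℝ) - t) / (T:ℝ))) := by
      rw [mul_add, hf1, hf2]; ring
    constructor
    · exact ⟨Q₁, Q₂, hQ₁, hQ₂, by rw [hft]; linarith [hQ₁eq, hQ₂eq]⟩
    · intro R₁ R₂ hR₁ hR₂
      rw [hft]
      have h1 := hlb₁ R₁ hR₁
      have h2 := hlb₂ R₂ hR₂
      linarith
  have hT0 : 0 < T := Nat.lt_of_lt_of_le Nat.zero_lt_one hT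
  set S₂ : Set ℝ := {v : ℝ | ∃ t : ℕ, t < T ∧
        v = ((T : ℝ) - t) * (Renyi ((t : ℝ) / T) PA PN
            + Renyi (((M : ℝ) - 2 * T + t) / ((M : ℝ) - T)) PN PA)} with hS₂
  set S₁ : Set ℝ := {v : ℝ | ∃ t : ℕ, t < T ∧ ∃ Q₁ Q₂ : X → ℝ, IsProb Q₁ ∧ IsProb Q₂ ∧
        v = ((T : ℝ) - t) * KL Q₁ PA + ((M : ℝ) - 2 * T + t) * KL Q₁ PN
          + ((T : ℝ) - t) * KL Q₂ PN + (t : ℝ) * KL Q₂ PA} with hS₁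
  have hfin : S₂.Finite := by
    apply Set.Finite.subset ((Set.finite_Iio T).image (fun t : ℕ =>
      ((T : ℝ) - t) * (Renyi ((t : ℝ) / T) PA PN
            + Renyi (((M : ℝ) - 2 * T + t) / ((M : ℝ) - T)) PN PA)))
    rintro v ⟨t, ht, rfl⟩
    exact ⟨t, ht, rfl⟩
  have hne₂ : S₂.Nonempty := ⟨_, 0, hT0, rfl⟩
  have hbdd₂ : BddBelow S₂ := hfin.bddBelow
  have hsub : S₂ ⊆ S₁ := by
    rintro v ⟨t, ht, rfl⟩
    obtain ⟨Q₁, Q₂, hQ₁, hQ₂, heq⟩ := (key t ht).1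
    exact ⟨t, ht, Q₁, Q₂, hQ₁, hQ₂, heq.symm⟩
  have hne₁ : S₁.Nonempty := hne₂.mono hsub
  have hbdd₁ : BddBelow S₁ := by
    refine ⟨sInf S₂, ?_⟩
    rintro w ⟨t, ht, Q₁, Q₂, hQ₁, hQ₂, rfl⟩
    calc sInf S₂ ≤ _ := csInf_le hbdd₂ ⟨t, ht, rfl⟩
      _ ≤ _ := (key t ht).2 Q₁ Q₂ hQ₁ hQ₂
  refine le_antisymm (csInf_le_csInf hbdd₁ hne₂ hsub) ?_
  apply le_csInf hne₁
  rintro w ⟨t, ht, Q₁, Q₂, hQ₁, hQ₂, rfl⟩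
  calc sInf S₂ ≤ _ := csInf_le hbdd₂ ⟨t, ht, rfl⟩
    _ ≤ _ := (key t ht).2 Q₁ Q₂ hQ₁ hQ₂
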